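/- For every integer n ≥ 1 and every value distribution represented by G as in the context, if the set {p(1−G(p)^n) : p ≥ 0} is bounded above, then R^x_n ≤ (2 − 1/n)·R^a_n; equivalently, for every q ∈ [0,1]^n with Σ_{i=1}^n q_i ≤ 1 one has Σ_{i=1}^n q_i·invG(1−q_i) ≤ (2 − 1/n)·sup_{p≥0} p(1−G(p)^n). -/

import Mathlib

lemma aux_pow (q : ℝ) (hq0 : 0 ≤ q) (hq1 : q ≤ 1) :
    ∀ m : ℕ, (1 - q) ^ m * (1 + m * q) ≤ 1 := by
  intro m
  induction m with
  | zero => simp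
  | succ k ih =>
    have h1 : (0 : ℝ) ≤ (1 - q) ^ k := pow_nonneg (by linarith) k
    have hk : (0 : ℝ) ≤ (k : ℝ) := Nat.cast_nonneg k
    rw [pow_succ]
    push_cast
    nlinarith [mul_nonneg h1 (mul_nonneg hq0 hq0), mul_nonneg (mul_nonneg h1 hk) (mul_nonneg hq0 hq0)]

lemma key_ineq (n : ℕ) (hn : 1 ≤ n) (q : ℝ) (hq0 : 0 ≤ q) (hq1 : q ≤ 1) :
    (n : ℝ) * q ≤ (1 + ((n : ℝ) - 1) * q) * (1 - (1 - q) ^ n) := by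
  obtain ⟨m, rfl⟩ := Nat.exists_eq_add_of_le hn
  have h := aux_pow q hq0 hq1 m
  have h1q : (0 : ℝ) ≤ 1 - q := by linarith
  rw [pow_add, pow_one]
  push_cast
  nlinarith [pow_nonneg h1q m, h]

/-- Theorem 3 (general distributions): the ex-ante relaxation revenue is at most
`(2 - 1/n)` times the optimal anonymous-price revenue.  The value distribution is
represented by `G` (the left-limit of the cdf), `invG t = sSup {p | 0 ≤ p ∧ G p ≤ t}`. -/
theorem stmt_0 (n : ℕ) (hn : 1 ≤ n) (G : ℝ → ℝ)
    (hmono : Monotone G)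
    (hleft : ∀ x : ℝ, Filter.Tendsto G (nhdsWithin x (Set.Iio x)) (nhds (G x)))
    (hG0 : ∀ p : ℝ, 0 ≤ G p) (hG1 : ∀ p : ℝ, G p ≤ 1)
    (hGneg : ∀ p : ℝ, p ≤ 0 → G p = 0)
    (hbddinv : ∀ t : ℝ, 0 ≤ t → t < 1 → BddAbove {p : ℝ | 0 ≤ p ∧ G p ≤ t})
    (hbddrev : BddAbove {r : ℝ | ∃ p : ℝ, 0 ≤ p ∧ r = p * (1 - (G p) ^ n)})
    (q : Fin n → ℝ) (hq0 : ∀ i, 0 ≤ q i) (hq1 : ∀ i, q i ≤ 1)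
    (hqsum : ∑ i, q i ≤ 1) :
    ∑ i, q i * sSup {p : ℝ | 0 ≤ p ∧ G p ≤ 1 - q i}
      ≤ (2 - 1 / (n : ℝ)) * sSup {r : ℝ | ∃ p : ℝ, 0 ≤ p ∧ r = p * (1 - (G p) ^ n)} := by
  set R : ℝ := sSup {r : ℝ | ∃ p : ℝ, 0 ≤ p ∧ r = p * (1 - (G p) ^ n)} with hRdef
  have hnpos : (0 : ℝ) < (n : ℝ) := by
    have : (1 : ℝ) ≤ (n : ℝ) := by exact_mod_cast hn
    linarith
  have hn1 : (1 : ℝ) ≤ (n : ℝ) := by exact_mod_cast hn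
  have hR0 : 0 ≤ R := by
    apply le_csSup hbddrev
    exact ⟨0, le_rfl, by ring⟩
  have hterm : ∀ i, q i * sSup {p : ℝ | 0 ≤ p ∧ G p ≤ 1 - q i}
      ≤ R * (1 / n + (1 - 1 / n) * q i) := by
    intro i
    rcases eq_or_lt_of_le (hq0 i) with h0 | hpos
    · rw [← h0]
      have : (0 : ℝ) ≤ R * (1 / n + (1 - 1 / n) * 0) := by
        have : (0 : ℝ) ≤ 1 / (n : ℝ) := by positivity
        nlinarith
      simpa using this
    · have hqi1 := hq1 i
      have ht0 : (0 : ℝ) ≤ 1 - q i := by linarith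
      have ht1 : 1 - q i < 1 := by linarith
      have hD : 0 < 1 - (1 - q i) ^ n := by
        have := pow_lt_one₀ ht0 ht1 (Nat.one_le_iff_ne_zero.mp hn)
        linarith
      have hkey := key_ineq n hn (q i) (hq0 i) hqi1
      have hc : (0 : ℝ) ≤ 1 + ((n : ℝ) - 1) * q i := by nlinarith [hq0 i]
      have hne : (0 : ℝ) ∈ {p : ℝ | 0 ≤ p ∧ G p ≤ 1 - q i} := by
        refine ⟨le_rfl, ?_⟩
        rw [hGneg 0 le_rfl]; exact ht0
      have hS : sSup {p : ℝ | 0 ≤ p ∧ G p ≤ 1 - q i}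
          ≤ R * (1 / n + (1 - 1 / n) * q i) / q i := by
        apply csSup_le ⟨0, hne⟩
        intro p hp
        obtain ⟨hp0, hpG⟩ := hp
        have hrev : p * (1 - (G p) ^ n) ≤ R := le_csSup hbddrev ⟨p, hp0, rfl⟩
        have hGp : (G p) ^ n ≤ (1 - q i) ^ n := pow_le_pow_left₀ (hG0 p) hpG n
        have h2 : p * (1 - (1 - q i) ^ n) ≤ R := by nlinarith
        have hmain : p * q i * (n : ℝ) ≤ R * (1 + ((n : ℝ) - 1) * q i) := by
          have a1 := mul_le_mul_of_nonneg_right hkey hp0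
          have a2 := mul_le_mul_of_nonneg_left h2 hc
          nlinarith [a1, a2]
        rw [le_div_iff₀ hpos]
        have heq : R * (1 / (n : ℝ) + (1 - 1 / n) * q i)
            = R * (1 + ((n : ℝ) - 1) * q i) / n := by
          field_simp
        rw [heq, le_div_iff₀ hnpos]
        linarith [hmain]
      calc q i * sSup {p : ℝ | 0 ≤ p ∧ G p ≤ 1 - q i}
          ≤ q i * (R * (1 / n + (1 - 1 / n) * q i) / q i) :=
            mul_le_mul_of_nonneg_left hS hpos.le
        _ = R * (1 / n + (1 - 1 / n) * q i) := by field_simp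
  calc ∑ i, q i * sSup {p : ℝ | 0 ≤ p ∧ G p ≤ 1 - q i}
      ≤ ∑ i, R * (1 / n + (1 - 1 / n) * q i) :=
        Finset.sum_le_sum fun i _ => hterm i
    _ = ∑ i : Fin n, (R / n + R * (1 - 1 / n) * q i) :=
        Finset.sum_congr rfl fun i _ => by ring
    _ = ∑ i : Fin n, R / n + R * (1 - 1 / n) * ∑ i, q i := by
        rw [Finset.sum_add_distrib, ← Finset.mul_sum]
    _ = R + R * (1 - 1 / n) * ∑ i, q i := by
        rw [Finset.sum_const, Finset.card_univ, Fintype.card_fin, nsmul_eq_mul]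
        field_simp
    _ ≤ (2 - 1 / (n : ℝ)) * R := by
        have hc : 0 ≤ R * (1 - 1 / (n : ℝ)) := by
          have : (0 : ℝ) ≤ 1 - 1 / (n : ℝ) := by
            have : 1 / (n : ℝ) ≤ 1 := by
              rw [div_le_one hnpos]; exact hn1
            linarith
          exact mul_nonneg hR0 this
        have hs0 : 0 ≤ ∑ i, q i := Finset.sum_nonneg fun i _ => hq0 i
        nlinarith [hc, hqsum, hs0]
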